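/- Let t̃ ∈ ℝ and H(t) = 2/(3(t − t̃)) for t ≠ t̃. Let P : ℝ → ℝ be three times continuously differentiable, let I be an open interval with t₀ ∈ I, t̃ ∉ I, and let X : I → ℝ be differentiable with H'(t) = −X(t)·P'(X(t)) for all t ∈ I (the Friedmann equation in reduced Planck units). Assume that at t₀: P(X(t₀)) = 0, X(t₀) ≠ 0, X'(t₀) ≠ 0, P'(X(t₀)) > 0, and P'(X(t₀)) + 2X(t₀)·P''(X(t₀)) > 0. Define c_s(t) = √(P'(X(t))/(P'(X(t)) + 2X(t)·P''(X(t)))) for t near t₀, s = c_s'(t₀)/(c_s(t₀)·H(t₀)), Σ(X) = X·P'(X) + 2X²·P''(X) and λ(X) = X²·P''(X) + (2/3)·X³·P'''(X). Then λ(X(t₀))/Σ(X(t₀)) = (1/3)·[(1/(2c_s(t₀)²))·(1 + (2/3)·s)·(1 + c_s(t₀)²) − 1]. -/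

import Mathlib

lemma aux0_sqrt_cancel (q0 qd x1 Hv s : ℝ) (hq0 : 0 < q0) (hH : Hv ≠ 0)
    (hs : s = (1 / (2 * Real.sqrt q0) * qd * x1) / (Real.sqrt q0 * Hv)) :
    s = qd * x1 / (2 * q0 * Hv) := by
  have h1 : Real.sqrt q0 * Real.sqrt q0 = q0 := Real.mul_self_sqrt hq0.le
  have h2 : Real.sqrt q0 ≠ 0 := ne_of_gt (Real.sqrt_pos.mpr hq0)
  rw [hs]
  have h3 : 2 * q0 * Hv = (2 * Real.sqrt q0) * (Real.sqrt q0 * Hv) := by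
    linear_combination (-2 * Hv) * h1
  rw [h3]
  conv_rhs => rw [← div_div]
  congr 1
  ring

lemma aux1_s_value (p1 p2 p3 x0 Hv x1 s : ℝ) (hp1 : p1 ≠ 0) (hD0 : p1 + 2*x0*p2 ≠ 0)
    (hE : p1 + x0*p2 ≠ 0) (hH : Hv ≠ 0)
    (hkey : x1 * (p1 + x0*p2) = -3*Hv*(x0*p1))
    (hsmid : s = ((p2*(p1+2*x0*p2) - p1*(p2+(2*p2+2*x0*p3)))/(p1+2*x0*p2)^2) * x1
      / (2*(p1/(p1+2*x0*p2))*Hv)) :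
    s = 3*x0*(p1*p2 - x0*p2^2 + x0*p1*p3)/((p1+2*x0*p2)*(p1+x0*p2)) := by
  have hx1 : x1 = -3*Hv*(x0*p1)/(p1+x0*p2) := by
    field_simp
    linarith [hkey]
  rw [hsmid, hx1]
  field_simp
  ring

lemma aux2_final (p1 p2 p3 x0 s c2 : ℝ) (hx0 : x0 ≠ 0) (hp1 : p1 ≠ 0)
    (hD0 : p1 + 2*x0*p2 ≠ 0) (hE : p1 + x0*p2 ≠ 0)
    (hc2 : c2 = p1/(p1+2*x0*p2))
    (hsv : s = 3*x0*(p1*p2 - x0*p2^2 + x0*p1*p3)/((p1+2*x0*p2)*(p1+x0*p2))) :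
    (x0^2*p2 + 2/3*x0^3*p3)/(x0*p1+2*x0^2*p2)
      = 1/3*((1/(2*c2))*(1+2/3*s)*(1+c2)-1) := by
  have hSig : x0*p1+2*x0^2*p2 ≠ 0 := by
    have h : x0*p1 + 2*x0^2*p2 = x0*(p1+2*x0*p2) := by ring
    rw [h]; exact mul_ne_zero hx0 hD0
  have hD0' : p1 + x0*p2*2 ≠ 0 := by rw [mul_assoc, mul_comm p2 2, ← mul_assoc, mul_comm x0 2]; exact hD0
  rw [hc2, hsv]
  field_simp
  ring

/-- Exact expression for the ratio λ/Σ of a k-essence scalar field in a matter-dominated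
contracting universe: with `H(t) = 2/(3(t − ttil))`, the Friedmann equation
`H' = −X·P'(X)` (reduced Planck units), vanishing pressure `P(X(t₀)) = 0`, sound speed
`c_s = √(P'/(P' + 2X·P''))` and running `s = c_s'(t₀)/(c_s(t₀)·H(t₀))`, one has
`λ/Σ = (1/3)·[(1/(2c_s²))·(1 + (2/3)s)·(1 + c_s²) − 1]` at `t₀`. -/
theorem lambda_over_Sigma_matter_contraction
    (ttil t₀ a b : ℝ)
    (P : ℝ → ℝ) (hP : ContDiff ℝ 3 P)
    (H : ℝ → ℝ) (hH : ∀ t : ℝ, t ≠ ttil → H t = 2 / (3 * (t - ttil)))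
    (ht₀ : t₀ ∈ Set.Ioo a b) (httil : ttil ∉ Set.Ioo a b)
    (X : ℝ → ℝ) (hX : DifferentiableOn ℝ X (Set.Ioo a b))
    (hFried : ∀ t ∈ Set.Ioo a b, deriv H t = -(X t * deriv P (X t)))
    (hp0 : P (X t₀) = 0) (hX0 : X t₀ ≠ 0) (hX' : deriv X t₀ ≠ 0)
    (hP1 : 0 < deriv P (X t₀))
    (hP2 : 0 < deriv P (X t₀) + 2 * X t₀ * deriv (deriv P) (X t₀))
    (cs : ℝ → ℝ)
    (hcs : ∀ t : ℝ, cs t = Real.sqrt (deriv P (X t)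
      / (deriv P (X t) + 2 * X t * deriv (deriv P) (X t))))
    (s : ℝ) (hs : s = deriv cs t₀ / (cs t₀ * H t₀))
    (Sig lam : ℝ → ℝ)
    (hSig : ∀ Y, Sig Y = Y * deriv P Y + 2 * Y ^ 2 * deriv (deriv P) Y)
    (hlam : ∀ Y, lam Y = Y ^ 2 * deriv (deriv P) Y
      + (2 / 3) * Y ^ 3 * deriv (deriv (deriv P)) Y) :
    lam (X t₀) / Sig (X t₀)
      = (1 / 3) * ((1 / (2 * (cs t₀) ^ 2)) * (1 + (2 / 3) * s) * (1 + (cs t₀) ^ 2) - 1) := by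
  set x0 : ℝ := X t₀ with hx0def
  set p1 : ℝ := deriv P x0 with hp1def
  set p2 : ℝ := deriv (deriv P) x0 with hp2def
  set p3 : ℝ := deriv (deriv (deriv P)) x0 with hp3def
  set x1 : ℝ := deriv X t₀ with hx1def
  have hne : ∀ t ∈ Set.Ioo a b, t ≠ ttil := fun t ht h => httil (h ▸ ht)
  have ht0ne : t₀ ≠ ttil := hne t₀ ht₀
  have hu : t₀ - ttil ≠ 0 := sub_ne_zero.mpr ht0ne
  set u : ℝ := t₀ - ttil with hudef
  have hmem : Set.Ioo a b ∈ nhds t₀ := Ioo_mem_nhds ht₀.1 ht₀.2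
  have hXd : DifferentiableAt ℝ X t₀ := hX.differentiableAt hmem
  -- smoothness of derivatives of P
  have hP' : ContDiff ℝ 2 (deriv P) := by
    have h : ContDiff ℝ ((2:ℕ∞)+1) P := by exact_mod_cast hP
    exact (contDiff_succ_iff_deriv.mp h).2.2
  have hP'' : ContDiff ℝ 1 (deriv (deriv P)) := by
    have h : ContDiff ℝ ((1:ℕ∞)+1) (deriv P) := by exact_mod_cast hP'
    exact (contDiff_succ_iff_deriv.mp h).2.2
  have dP1 : DifferentiableAt ℝ (deriv P) x0 :=
    (hP'.differentiable (by norm_num)).differentiableAt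
  have dP2 : DifferentiableAt ℝ (deriv (deriv P)) x0 :=
    (hP''.differentiable one_ne_zero).differentiableAt
  -- derivative of H on the interval
  have hHderiv : ∀ t ∈ Set.Ioo a b, deriv H t = -(2 / (3 * (t - ttil) ^ 2)) := by
    intro t ht
    have hev : H =ᶠ[nhds t] fun r => 2 / (3 * (r - ttil)) := by
      filter_upwards [Ioo_mem_nhds ht.1 ht.2] with r hr using hH r (hne r hr)
    rw [hev.deriv_eq]
    have htne : t - ttil ≠ 0 := sub_ne_zero.mpr (hne t ht)
    have h1 : HasDerivAt (fun r : ℝ => 2 / (3 * (r - ttil)))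
        ((0 * (3 * (t - ttil)) - 2 * 3) / (3 * (t - ttil)) ^ 2) t :=
      (hasDerivAt_const t 2).div
        (by simpa using ((hasDerivAt_id t).sub_const ttil).const_mul (3:ℝ))
        (mul_ne_zero three_ne_zero htne)
    rw [h1.deriv]
    field_simp
    ring
  -- Friedmann: X·P'(X) = 2/(3(t-ttil)^2) on the interval
  have geq : ∀ t ∈ Set.Ioo a b, X t * deriv P (X t) = 2 / (3 * (t - ttil) ^ 2) := by
    intro t ht
    have := hFried t ht
    rw [hHderiv t ht] at this
    linarith
  have hA : x0 * p1 = 2 / (3 * u ^ 2) := geq t₀ ht₀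
  -- differentiate the relation
  have hgd : HasDerivAt (fun t => X t * deriv P (X t)) (x1 * p1 + x0 * (p2 * x1)) t₀ := by
    have hc : HasDerivAt (fun t => deriv P (X t)) (p2 * x1) t₀ :=
      (dP1.hasDerivAt).comp t₀ hXd.hasDerivAt
    exact hXd.hasDerivAt.mul hc
  have hrhs : HasDerivAt (fun t : ℝ => 2 / (3 * (t - ttil) ^ 2))
      (-(4 / (3 * u ^ 3))) t₀ := by
    have hd : HasDerivAt (fun t : ℝ => 3 * (t - ttil) ^ 2)
        (3 * (2 * (t₀ - ttil) ^ 1 * 1)) t₀ :=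
      (((hasDerivAt_id t₀).sub_const ttil).pow 2).const_mul 3
    have h1 : HasDerivAt (fun t : ℝ => 2 / (3 * (t - ttil) ^ 2))
        ((0 * (3 * (t₀ - ttil) ^ 2) - 2 * (3 * (2 * (t₀ - ttil) ^ 1 * 1)))
          / (3 * (t₀ - ttil) ^ 2) ^ 2) t₀ := (hasDerivAt_const t₀ (2:ℝ)).div hd
      (mul_ne_zero three_ne_zero (pow_ne_zero 2 hu))
    convert h1 using 1
    rw [hudef]
    field_simp
    ring
  have hB : x1 * p1 + x0 * (p2 * x1) = -(4 / (3 * u ^ 3)) := by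
    have hev : (fun t => X t * deriv P (X t))
        =ᶠ[nhds t₀] fun t => 2 / (3 * (t - ttil) ^ 2) := by
      filter_upwards [hmem] with t ht using geq t ht
    rw [← hgd.deriv, hev.deriv_eq, hrhs.deriv]
  -- key nonvanishing facts
  have hune : (4 : ℝ) / (3 * u ^ 3) ≠ 0 := by positivity
  have hE : p1 + x0 * p2 ≠ 0 := by
    intro h
    apply hune
    have h2 : x1 * p1 + x0 * (p2 * x1) = x1 * (p1 + x0 * p2) := by ring
    rw [h2, h, mul_zero] at hB
    linarith
  have hD0 : p1 + 2 * x0 * p2 ≠ 0 := ne_of_gt hP2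
  have hp1ne : p1 ≠ 0 := ne_of_gt hP1
  -- H value at t₀
  have hH0 : H t₀ = 2 / (3 * u) := hH t₀ ht0ne
  have hH0ne : H t₀ ≠ 0 := by rw [hH0]; positivity
  -- the key relation x1·(p1 + x0 p2) = -3 H₀ x0 p1
  have hkey : x1 * (p1 + x0 * p2) = -3 * H t₀ * (x0 * p1) := by
    have h1 : x1 * (p1 + x0 * p2) = -(4 / (3 * u ^ 3)) := by rw [← hB]; ring
    rw [h1, hH0, hA]
    first
    | (field_simp; ring)
    | field_simp
  -- sound speed derivative
  have hq0pos : 0 < p1 / (p1 + 2 * x0 * p2) := div_pos hP1 hP2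
  have hden : HasDerivAt (fun y => deriv P y + 2 * y * deriv (deriv P) y)
      (p2 + (2 * p2 + 2 * x0 * p3)) x0 := by
    have h2 : HasDerivAt (fun y : ℝ => 2 * y) 2 x0 := by
      simpa using (hasDerivAt_id x0).const_mul (2:ℝ)
    have h3 := h2.mul dP2.hasDerivAt
    have h4 := dP1.hasDerivAt.add h3
    exact h4
  have hF : HasDerivAt (fun y => deriv P y / (deriv P y + 2 * y * deriv (deriv P) y))
      ((p2 * (p1 + 2 * x0 * p2) - p1 * (p2 + (2 * p2 + 2 * x0 * p3)))
        / (p1 + 2 * x0 * p2) ^ 2) x0 := dP1.hasDerivAt.div hden hD0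
  have hsq : HasDerivAt Real.sqrt
      (1 / (2 * Real.sqrt (p1 / (p1 + 2 * x0 * p2))))
      (deriv P x0 / (deriv P x0 + 2 * x0 * deriv (deriv P) x0)) :=
    Real.hasDerivAt_sqrt (ne_of_gt hq0pos)
  have hcseq : cs = fun t => Real.sqrt
      (deriv P (X t) / (deriv P (X t) + 2 * X t * deriv (deriv P) (X t))) :=
    funext fun t => hcs t
  have hcsd : HasDerivAt cs
      (1 / (2 * Real.sqrt (p1 / (p1 + 2 * x0 * p2)))
        * ((p2 * (p1 + 2 * x0 * p2) - p1 * (p2 + (2 * p2 + 2 * x0 * p3)))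
            / (p1 + 2 * x0 * p2) ^ 2)
        * x1) t₀ := by
    rw [hcseq]
    exact (hsq.comp x0 hF).comp t₀ hXd.hasDerivAt
  have hcst0 : cs t₀ = Real.sqrt (p1 / (p1 + 2 * x0 * p2)) := hcs t₀
  -- explicit value of s
  have s_mid : s = ((p2 * (p1 + 2 * x0 * p2) - p1 * (p2 + (2 * p2 + 2 * x0 * p3)))
        / (p1 + 2 * x0 * p2) ^ 2) * x1
      / (2 * (p1 / (p1 + 2 * x0 * p2)) * H t₀) := by
    apply aux0_sqrt_cancel _ _ _ _ _ hq0pos hH0ne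
    rw [hs, hcsd.deriv, hcst0]
  have hs_val : s = 3 * x0 * (p1 * p2 - x0 * p2 ^ 2 + x0 * p1 * p3)
      / ((p1 + 2 * x0 * p2) * (p1 + x0 * p2)) :=
    aux1_s_value p1 p2 p3 x0 (H t₀) x1 s hp1ne hD0 hE hH0ne hkey s_mid
  -- final algebra
  have hcssq : (cs t₀) ^ 2 = p1 / (p1 + 2 * x0 * p2) := by
    rw [hcst0, Real.sq_sqrt hq0pos.le]
  rw [hlam, hSig]
  exact aux2_final p1 p2 p3 x0 s ((cs t₀) ^ 2) hX0 hp1ne hD0 hE hcssq hs_val
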